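/- (Widest path is solved by the generalized Bellman–Ford algorithm with ⊕ = max, ⊗ = min.) For every natural number t and all vertices u, v : V, the (max, min) Bellman–Ford iterate equals the supremum over all walks of length at most t of the minimum edge capacity along the walk: W_t u v = ⨆_{k ∈ Finset.range (t+1)} ⨆ over all walks p of length k from u to v of ⨅_{i=0}^{k-1} w (p i) (p (i+1)) (the empty infimum for k = 0 is ∞, and the supremum over an empty set of walks is 0). -/

import Mathlib

open ENNReal

/-- The (max, min) generalized Bellman–Ford iterates for widest path:
`W 0 u v = if u = v then ∞ else 0` and
`W (t+1) u v = max (⨆ x, min (W t u x) (w x v)) (W 0 u v)`. -/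
noncomputable def maxMinBF {V : Type*} [Fintype V] [DecidableEq V]
    (w : Matrix V V ℝ≥0∞) : ℕ → V → V → ℝ≥0∞
  | 0 => fun u v => if u = v then ∞ else 0
  | t + 1 => fun u v =>
      max (⨆ x : V, min (maxMinBF w t u x) (w x v)) (if u = v then ∞ else 0)

noncomputable def walkSup {V : Type*} (w : Matrix V V ℝ≥0∞) (k : ℕ) (u v : V) : ℝ≥0∞ :=
  ⨆ p : {p : Fin (k + 1) → V // p 0 = u ∧ p (Fin.last k) = v},
    ⨅ i : Fin k, w (p.1 i.castSucc) (p.1 i.succ)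

lemma iInf_fin_castSucc {α : Type*} [CompleteLattice α] {n : ℕ} (f : Fin (n + 1) → α) :
    ⨅ i, f i = (⨅ i : Fin n, f i.castSucc) ⊓ f (Fin.last n) := by
  apply le_antisymm
  · exact le_inf (le_iInf fun i => iInf_le _ _) (iInf_le _ _)
  · refine le_iInf fun i => ?_
    cases i using Fin.lastCases with
    | last => exact inf_le_right
    | cast j => exact inf_le_left.trans (iInf_le _ j)

lemma walkSup_zero {V : Type*} (w : Matrix V V ℝ≥0∞) (u v : V) [DecidableEq V] :
    walkSup w 0 u v = if u = v then ∞ else 0 := by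
  unfold walkSup
  split_ifs with h
  · subst h
    apply le_antisymm le_top
    have : (⨅ i : Fin 0, w ((fun _ => u) (Fin.castSucc i)) ((fun _ => u) i.succ)) = ⊤ := by
      simp
    calc (⊤ : ℝ≥0∞) = _ := this.symm
      _ ≤ _ := le_iSup (fun p : {p : Fin 1 → V // p 0 = u ∧ p (Fin.last 0) = u} =>
          ⨅ i : Fin 0, w (p.1 i.castSucc) (p.1 i.succ)) ⟨fun _ => u, rfl, rfl⟩
  · have : IsEmpty {p : Fin 1 → V // p 0 = u ∧ p (Fin.last 0) = v} := by
      constructor; rintro ⟨p, h0, h1⟩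
      exact h (h0 ▸ h1 ▸ rfl)
    rw [iSup_of_empty]; simp

lemma walkSup_succ {V : Type*} [Fintype V] (w : Matrix V V ℝ≥0∞) (k : ℕ) (u v : V) :
    walkSup w (k + 1) u v = ⨆ x : V, min (walkSup w k u x) (w x v) := by
  unfold walkSup
  apply le_antisymm
  · refine iSup_le fun q => ?_
    obtain ⟨q, hq0, hq1⟩ := q
    set x := q (Fin.last k).castSucc with hx
    have key : (⨅ i : Fin (k + 1), w (q i.castSucc) (q i.succ)) =
        (⨅ i : Fin k, w ((q ∘ Fin.castSucc) i.castSucc) ((q ∘ Fin.castSucc) i.succ)) ⊓ w x v := by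
      rw [iInf_fin_castSucc (fun i : Fin (k+1) => w (q i.castSucc) (q i.succ))]
      refine congrArg₂ (· ⊓ ·) (iInf_congr fun i => ?_) ?_
      · simp only [Function.comp, Fin.succ_castSucc]
      · rw [← hq1, Fin.succ_last]
    rw [key]
    refine le_trans ?_ (le_iSup _ x)
    gcongr
    exact le_iSup (fun p : {p : Fin (k+1) → V // p 0 = u ∧ p (Fin.last k) = x} =>
        ⨅ i : Fin k, w (p.1 i.castSucc) (p.1 i.succ))
      ⟨q ∘ Fin.castSucc, by simpa using hq0, rfl⟩
  · refine iSup_le fun x => ?_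
    rw [min_comm, inf_iSup_eq]
    refine iSup_le fun p => ?_
    obtain ⟨p, hp0, hp1⟩ := p
    have key : (w x v ⊓ ⨅ i : Fin k, w (p i.castSucc) (p i.succ)) =
        ⨅ i : Fin (k + 1), w ((Fin.snoc p v : Fin (k+1+1) → V) i.castSucc) ((Fin.snoc p v : Fin (k+1+1) → V) i.succ) := by
      rw [iInf_fin_castSucc (fun i : Fin (k+1) => w ((Fin.snoc p v : Fin (k+1+1) → V) i.castSucc) ((Fin.snoc p v : Fin (k+1+1) → V) i.succ))]
      rw [inf_comm]
      refine congrArg₂ (· ⊓ ·) (iInf_congr fun i => ?_) ?_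
      · rw [Fin.succ_castSucc]
        simp only [Fin.snoc_castSucc]
      · rw [Fin.succ_last]
        simp [Fin.snoc_castSucc, Fin.snoc_last, hp1]
    rw [key]
    exact le_iSup (fun q : {q : Fin (k+2) → V // q 0 = u ∧ q (Fin.last (k+1)) = v} =>
        ⨅ i : Fin (k+1), w (q.1 i.castSucc) (q.1 i.succ))
      ⟨Fin.snoc p v, by
        have h := @Fin.snoc_castSucc (k+1) (fun _ => V) v p 0
        simpa [Fin.castSucc_zero] using h.trans hp0, Fin.snoc_last ..⟩

lemma biSup_range_succ' {α : Type*} [CompleteLattice α] (n : ℕ) (f : ℕ → α) :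
    ⨆ k ∈ Finset.range (n + 1), f k = f 0 ⊔ ⨆ k ∈ Finset.range n, f (k + 1) := by
  apply le_antisymm
  · refine iSup₂_le fun k hk => ?_
    cases k with
    | zero => exact le_sup_left
    | succ m =>
      exact le_sup_of_le_right (le_iSup₂ (f := fun k (_ : k ∈ Finset.range n) => f (k+1)) m
        (by simpa using hk))
  · refine sup_le (le_iSup₂ (f := fun k (_ : k ∈ Finset.range (n+1)) => f k) 0 (by simp)) ?_
    exact iSup₂_le fun k hk =>
      le_iSup₂ (f := fun k (_ : k ∈ Finset.range (n+1)) => f k) (k+1) (by simpa using hk)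

theorem test {V : Type*} [Fintype V] [DecidableEq V]
    (w : Matrix V V ℝ≥0∞) (t : ℕ) (u v : V) :
    (maxMinBF w t u v : ℝ≥0∞) = ⨆ k ∈ Finset.range (t + 1), walkSup w k u v := by
  induction t generalizing v with
  | zero => simp [maxMinBF, walkSup_zero, Finset.range_one]
  | succ t ih =>
    rw [show maxMinBF w (t+1) u v =
      max (⨆ x : V, min (maxMinBF w t u x) (w x v)) (if u = v then ∞ else 0) from rfl]
    rw [biSup_range_succ' (t+1) (fun k => walkSup w k u v), walkSup_zero]
    have hcalc : (⨆ x : V, min (maxMinBF w t u x) (w x v)) =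
        ⨆ k ∈ Finset.range (t+1), walkSup w (k+1) u v := calc
      ⨆ x : V, min (maxMinBF w t u x) (w x v)
        = ⨆ x : V, ⨆ k ∈ Finset.range (t+1), min (walkSup w k u x) (w x v) := by
          refine iSup_congr fun x => ?_
          rw [ih x, iSup_inf_eq]
          exact iSup_congr fun k => iSup_inf_eq ..
      _ = ⨆ k ∈ Finset.range (t+1), ⨆ x : V, min (walkSup w k u x) (w x v) := by
          rw [iSup_comm]
          exact iSup_congr fun k => iSup_comm
      _ = ⨆ k ∈ Finset.range (t+1), walkSup w (k+1) u v := by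
          exact iSup_congr fun k => iSup_congr fun _ => (walkSup_succ w k u v).symm
    rw [hcalc]
    exact sup_comm _ _

theorem maxMinBF_eq_sup_over_short_walks {V : Type*} [Fintype V] [DecidableEq V]
    (w : Matrix V V ℝ≥0∞) (t : ℕ) (u v : V) :
    maxMinBF w t u v =
      ⨆ k ∈ Finset.range (t + 1),
        ⨆ p : {p : Fin (k + 1) → V // p 0 = u ∧ p (Fin.last k) = v},
          ⨅ i : Fin k, w (p.1 i.castSucc) (p.1 i.succ) := by
  exact test w t u v
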